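/- For any simple directed graph with n vertices and m arcs, the normalized Laplacian eigenvalue spread satisfies σ² ≥ (1/(n-1)²)[m - (n-1)κ][(n-1)(κ+1) - m], where κ = ⌊m/(n-1)⌋. -/

import Mathlib

open Polynomial

/-- In-degree Laplacian `L = D - A` of a simple directed graph:
`A j i = true` means `(j, i)` is an arc. -/
noncomputable def lap (n : ℕ) (A : Fin n → Fin n → Bool) : Matrix (Fin n) (Fin n) ℂ :=
  Matrix.diagonal (fun i => ∑ j, if A j i then (1 : ℂ) else 0) -
    Matrix.of (fun i j => if A j i then (1 : ℂ) else 0)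

/-- Number of arcs of the directed graph. -/
def arcs (n : ℕ) (A : Fin n → Fin n → Bool) : ℕ :=
  (Finset.univ.filter (fun p : Fin n × Fin n => A p.1 p.2)).card

namespace Stmt6Aux

lemma prod_le_exp_sum (g h : ℂ → ℝ) (hg : ∀ w, 0 ≤ g w) (hgh : ∀ w, g w ≤ Real.exp (h w)) :
    ∀ W : Multiset ℂ, (W.map g).prod ≤ Real.exp ((W.map h).sum) := by
  intro W
  induction W using Multiset.induction_on with
  | empty => simp
  | cons a s ih =>
      simp only [Multiset.map_cons, Multiset.prod_cons, Multiset.sum_cons, Real.exp_add]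
      have hprod : (0:ℝ) ≤ (s.map g).prod := by
        apply Multiset.prod_nonneg
        intro x hx
        obtain ⟨w, -, rfl⟩ := Multiset.mem_map.mp hx
        exact hg w
      exact mul_le_mul (hgh a) ih hprod (Real.exp_nonneg _)

lemma sum_map_le (f g : ℂ → ℝ) (h : ∀ w, f w ≤ g w) :
    ∀ W : Multiset ℂ, (W.map f).sum ≤ (W.map g).sum := by
  intro W
  induction W using Multiset.induction_on with
  | empty => simp
  | cons a s ih =>
      simp only [Multiset.map_cons, Multiset.sum_cons]
      exact add_le_add (h a) ih

lemma factor_bound (c : ℤ) (w : ℂ) :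
    ‖((c:ℂ) - w) * ((c:ℂ) + 1 - w)‖ ≤
      Real.exp (Complex.normSq (w - c - 1/2) - 3/4) := by
  have hv : ((c:ℂ) - w) * ((c:ℂ) + 1 - w) = (w - (c:ℂ) - 1/2)^2 - (1/2:ℂ)^2 := by ring
  have h1 : ‖(w - (c:ℂ) - 1/2)^2 - (1/2:ℂ)^2‖
      ≤ ‖(w - (c:ℂ) - 1/2)^2‖ + ‖(1/2:ℂ)^2‖ := by
    exact norm_sub_le _ _
  have h2 : ‖(w - (c:ℂ) - 1/2)^2‖ = Complex.normSq (w - (c:ℂ) - 1/2) := by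
    rw [norm_pow, Complex.sq_norm]
  have h3 : ‖(1/2:ℂ)^2‖ = 1/4 := by
    rw [norm_pow, norm_div, norm_one, Complex.norm_two]
    norm_num
  have h4 := Real.add_one_le_exp (Complex.normSq (w - (c:ℂ) - 1/2) - 3/4)
  rw [hv]
  refine le_trans h1 ?_
  rw [h2, h3]
  linarith

lemma key (c : ℤ) (W : Multiset ℂ)
    (hex : ∃ f : Polynomial ℤ,
      f.map (Int.castRingHom ℂ) = (W.map (fun w => X - C w)).prod) :
    0 ≤ (W.map (fun w => Complex.normSq (w - c - 1/2) - 1/4)).sum := by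
  induction W using Multiset.strongInductionOn with
  | ih W ih =>
    obtain ⟨f, hf⟩ := hex
    have heval : ∀ a : ℤ, ((f.eval a : ℤ) : ℂ) = (W.map (fun w => (a:ℂ) - w)).prod := by
      intro a
      have h1 : (f.map (Int.castRingHom ℂ)).eval ((a:ℤ):ℂ) = (Int.castRingHom ℂ) (f.eval a) :=
        Polynomial.eval_intCast_map _ _ _
      rw [hf, Polynomial.eval_multiset_prod, Multiset.map_map] at h1
      simpa using h1.symm
    by_cases hroot : f.eval c = 0 ∨ f.eval (c+1) = 0
    · obtain ⟨a, ha, hterm⟩ : ∃ a : ℤ, f.eval a = 0 ∧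
          Complex.normSq ((a:ℂ) - c - 1/2) - 1/4 = 0 := by
        rcases hroot with h | h
        · refine ⟨c, h, ?_⟩
          have h2 : ((c:ℂ) - c - 1/2) = (((-1:ℝ)/2 : ℝ) : ℂ) := by push_cast; ring
          rw [h2, Complex.normSq_ofReal]; norm_num
        · refine ⟨c+1, h, ?_⟩
          have h2 : (((c+1:ℤ):ℂ) - c - 1/2) = (((1:ℝ)/2 : ℝ) : ℂ) := by push_cast; ring
          rw [h2, Complex.normSq_ofReal]; norm_num
      have hmem : ((a:ℤ):ℂ) ∈ W := by
        have h1 := heval a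
        rw [ha] at h1
        have h2 : (W.map (fun w => (a:ℂ) - w)).prod = 0 := by simpa using h1.symm
        rw [Multiset.prod_eq_zero_iff] at h2
        obtain ⟨w, hw, hw0⟩ := Multiset.mem_map.mp h2
        rw [show (a:ℂ) = w from sub_eq_zero.mp hw0]
        exact hw
      obtain ⟨W', rfl⟩ := Multiset.exists_cons_of_mem hmem
      have hdvd : (X - C a) ∣ f := Polynomial.dvd_iff_isRoot.mpr ha
      obtain ⟨f₁, hf₁⟩ := hdvd
      have hmap1 : (X - C ((a:ℤ):ℂ)) * f₁.map (Int.castRingHom ℂ)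
          = (X - C ((a:ℤ):ℂ)) * (W'.map (fun w => X - C w)).prod := by
        have h3 := hf
        rw [hf₁, Polynomial.map_mul, Polynomial.map_sub, Polynomial.map_X,
          Polynomial.map_C, Multiset.map_cons, Multiset.prod_cons] at h3
        simpa using h3
      have hcancel : f₁.map (Int.castRingHom ℂ) = (W'.map (fun w => X - C w)).prod :=
        mul_left_cancel₀ (Polynomial.X_sub_C_ne_zero _) hmap1
      have hrest := ih W' (Multiset.lt_cons_self _ _) ⟨f₁, hcancel⟩
      rw [Multiset.map_cons, Multiset.sum_cons, hterm, zero_add]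
      exact hrest
    · push_neg at hroot
      obtain ⟨hc, hc1⟩ := hroot
      have hk : f.eval c * f.eval (c+1) ≠ 0 := mul_ne_zero hc hc1
      have h1 : (1:ℝ) ≤ ‖(((f.eval c * f.eval (c+1) : ℤ)):ℂ)‖ := by
        rw [Complex.norm_intCast]
        have h2 := Int.one_le_abs hk
        exact_mod_cast h2
      have e2 : ((f.eval (c+1) : ℤ):ℂ) = (W.map (fun w => (c:ℂ) + 1 - w)).prod := by
        have h2 := heval (c+1)
        push_cast at h2 ⊢
        exact h2
      have e3 : ((f.eval c * f.eval (c+1) : ℤ):ℂ)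
          = (W.map (fun w => ((c:ℂ) - w) * ((c:ℂ) + 1 - w))).prod := by
        push_cast
        rw [show ((f.eval c : ℤ):ℂ) * ((f.eval (c+1) : ℤ):ℂ)
            = (W.map (fun w => (c:ℂ) - w)).prod * (W.map (fun w => (c:ℂ) + 1 - w)).prod
          from by rw [heval c, e2], ← Multiset.prod_map_mul]
      have h4 := congrArg (normHom : ℂ →*₀ ℝ) e3
      rw [map_multiset_prod, Multiset.map_map] at h4
      simp only [Function.comp, normHom_apply] at h4
      have h5 : (1:ℝ) ≤
          (W.map (fun w => ‖((c:ℂ) - w) * ((c:ℂ) + 1 - w)‖)).prod := by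
        rw [← h4]; exact h1
      have h6 := prod_le_exp_sum
        (fun w => ‖((c:ℂ) - w) * ((c:ℂ) + 1 - w)‖)
        (fun w => Complex.normSq (w - c - 1/2) - 3/4)
        (fun w => norm_nonneg _) (factor_bound c) W
      have h7 : (0:ℝ) ≤ (W.map (fun w => Complex.normSq (w - c - 1/2) - 3/4)).sum :=
        Real.one_le_exp_iff.mp (le_trans h5 h6)
      have h8 := sum_map_le (fun w => Complex.normSq (w - c - 1/2) - 3/4)
        (fun w => Complex.normSq (w - c - 1/2) - 1/4) (fun w => by linarith) W
      linarith

end Stmt6Aux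

/-- For any simple directed graph with `n` vertices and `m` arcs, with Laplacian
eigenvalues `λ₁ = 0, λ₂, ..., λₙ`, the normalized spread
`σ² = (1/(n-1)) ∑_{i≥2} |λᵢ - m/(n-1)|²` is at least
`(1/(n-1)²)[m - (n-1)κ][(n-1)(κ+1) - m]` where `κ = ⌊m/(n-1)⌋`. -/
theorem stmt6 (n : ℕ) (hn : 2 ≤ n) (A : Fin n → Fin n → Bool)
    (hsimple : ∀ i, A i i = false) (m : ℕ) (hm : arcs n A = m)
    (lam : Fin n → ℂ) (hfac : (lap n A).charpoly = ∏ i, (X - C (lam i)))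
    (h0 : lam ⟨0, by omega⟩ = 0) :
    ((m : ℝ) - ((n : ℝ) - 1) * ((m / (n - 1) : ℕ) : ℝ)) *
        (((n : ℝ) - 1) * (((m / (n - 1) : ℕ) : ℝ) + 1) - (m : ℝ)) / ((n : ℝ) - 1) ^ 2 ≤
      (∑ i ∈ Finset.univ.erase (⟨0, by omega⟩ : Fin n),
        ‖lam i - (((m : ℝ) / ((n : ℝ) - 1) : ℝ) : ℂ)‖ ^ 2) / ((n : ℝ) - 1) := by
  classical
  set i0 : Fin n := ⟨0, by omega⟩ with hi0
  set s : Finset (Fin n) := Finset.univ.erase i0 with hs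
  -- the integer matrix
  set M : Matrix (Fin n) (Fin n) ℤ :=
    Matrix.diagonal (fun i => ∑ j, if A j i then (1 : ℤ) else 0) -
      Matrix.of (fun i j => if A j i then (1 : ℤ) else 0) with hMdef
  have hM : lap n A = M.map (Int.castRingHom ℂ) := by
    ext i j
    simp [lap, hMdef, Matrix.map_apply, Matrix.sub_apply, Matrix.diagonal, Matrix.of_apply,
      apply_ite (fun z : ℤ => (z : ℂ))]
  have hpoly : M.charpoly.map (Int.castRingHom ℂ) = ∏ i, (X - C (lam i)) := by
    rw [← Matrix.charpoly_map, ← hM, hfac]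
  -- trace computation
  have htr : Matrix.trace (lap n A) = (m:ℂ) := by
    have harcs : ((m : ℕ) : ℂ) = ∑ p : Fin n × Fin n, if A p.1 p.2 then (1:ℂ) else 0 := by
      rw [Finset.sum_boole, ← hm, arcs]
    rw [harcs, Matrix.trace, Fintype.sum_prod_type, Finset.sum_comm]
    apply Finset.sum_congr rfl
    intro i _
    simp [lap, Matrix.diag, Matrix.sub_apply, Matrix.diagonal_apply_eq, Matrix.of_apply,
      hsimple i]
  have hsumall : ∑ i, lam i = (m:ℂ) := by
    have hNe : Nonempty (Fin n) := ⟨i0⟩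
    have h1 := Matrix.trace_eq_neg_charpoly_coeff (lap n A)
    rw [hfac, htr] at h1
    have hdeg : (∏ i : Fin n, (X - C (lam i))).natDegree = n := by
      rw [Polynomial.natDegree_prod _ _ (fun i _ => Polynomial.X_sub_C_ne_zero (lam i))]
      simp [Polynomial.natDegree_X_sub_C]
    have hnext := Polynomial.prod_X_sub_C_nextCoeff (s := (Finset.univ : Finset (Fin n))) lam
    rw [Polynomial.nextCoeff_of_natDegree_pos (by rw [hdeg]; omega), hdeg] at hnext
    rw [show Fintype.card (Fin n) = n from Fintype.card_fin n, hnext] at h1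
    rw [h1, neg_neg]
  have hsum : ∑ i ∈ s, lam i = (m:ℂ) := by
    have h1 := Finset.sum_erase_add Finset.univ lam (Finset.mem_univ i0)
    rw [h0] at h1
    rw [hs, ← hsumall, ← h1, add_zero]
  -- charpoly has root 0 over ℤ
  have hev0 : M.charpoly.eval 0 = 0 := by
    have h1 := Polynomial.eval_intCast_map (Int.castRingHom ℂ) M.charpoly 0
    rw [hpoly] at h1
    have h2 : (∏ i : Fin n, (X - C (lam i))).eval (((0:ℤ):ℂ)) = 0 := by
      rw [Polynomial.eval_prod]
      apply Finset.prod_eq_zero (Finset.mem_univ i0)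
      simp [h0]
    rw [h2] at h1
    have h3 := h1.symm
    rw [eq_intCast] at h3
    exact_mod_cast h3
  set q : Polynomial ℤ := M.charpoly /ₘ X with hqdef
  have hq : X * q = M.charpoly := by
    have h1 := Polynomial.modByMonic_add_div M.charpoly (q := X)
    rw [Polynomial.modByMonic_X, hev0, map_zero, zero_add] at h1
    exact h1
  have hqmap : q.map (Int.castRingHom ℂ) = ∏ i ∈ s, (X - C (lam i)) := by
    have h1 : X * q.map (Int.castRingHom ℂ) = X * ∏ i ∈ s, (X - C (lam i)) := by
      calc X * q.map (Int.castRingHom ℂ)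
          = (X * q).map (Int.castRingHom ℂ) := by rw [Polynomial.map_mul, Polynomial.map_X]
        _ = M.charpoly.map (Int.castRingHom ℂ) := by rw [hq]
        _ = ∏ i, (X - C (lam i)) := hpoly
        _ = (X - C (lam i0)) * ∏ i ∈ s, (X - C (lam i)) :=
            (Finset.mul_prod_erase _ _ (Finset.mem_univ i0)).symm
        _ = X * ∏ i ∈ s, (X - C (lam i)) := by rw [h0, map_zero, sub_zero]
    exact mul_left_cancel₀ Polynomial.X_ne_zero h1
  -- apply the key lemma
  set c : ℤ := ((m / (n - 1) : ℕ) : ℤ) with hc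
  set W : Multiset ℂ := s.val.map lam with hW
  have hWprod : q.map (Int.castRingHom ℂ) = (W.map (fun w => X - C w)).prod := by
    rw [hqmap, Finset.prod_eq_multiset_prod, hW, Multiset.map_map]
    rfl
  have hkey := Stmt6Aux.key c W ⟨q, hWprod⟩
  have hkey' : (0:ℝ) ≤ ∑ i ∈ s, (Complex.normSq (lam i - c - 1/2) - 1/4) := by
    rw [Finset.sum_eq_multiset_sum]
    rw [hW, Multiset.map_map] at hkey
    exact hkey
  -- pass to real coordinates
  have hre : ∑ i ∈ s, (lam i).re = (m:ℝ) := by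
    have h1 := congrArg Complex.re hsum
    rw [Complex.re_sum] at h1
    simpa using h1
  set N : ℝ := (n:ℝ) - 1 with hN
  have hNpos : (0:ℝ) < N := by
    rw [hN]
    have h2 : (2:ℝ) ≤ (n:ℝ) := by exact_mod_cast hn
    linarith
  have hcard : ((s.card : ℕ) : ℝ) = N := by
    rw [hs, Finset.card_erase_of_mem (Finset.mem_univ i0), Finset.card_univ, Fintype.card_fin]
    rw [hN]
    have h2 : 1 ≤ n := by omega
    push_cast [Nat.cast_sub h2]
    ring
  set cr : ℝ := ((m / (n - 1) : ℕ) : ℝ) with hcr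
  set mu : ℝ := (m:ℝ) / N with hmu
  -- rewrite key inequality in coordinates
  have hterm1 : ∀ i : Fin n, Complex.normSq (lam i - c - 1/2) - 1/4
      = (((lam i).re - mu)^2 + ((lam i).im)^2) + 2*(mu - cr - 1/2)*((lam i).re - mu)
        + ((mu - cr - 1/2)^2 - 1/4) := by
    intro i
    have hcast : ((cr : ℝ) : ℂ) = (c : ℂ) := by
      rw [hcr, hc]; norm_cast
    have hrw : lam i - (c:ℂ) - 1/2 = lam i - ((cr + 1/2 : ℝ) : ℂ) := by
      rw [Complex.ofReal_add, hcast]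
      push_cast
      ring
    rw [hrw, Complex.normSq_apply]
    simp only [Complex.sub_re, Complex.sub_im, Complex.ofReal_re, Complex.ofReal_im]
    ring
  have hsum_re_mu : ∑ i ∈ s, ((lam i).re - mu) = 0 := by
    rw [Finset.sum_sub_distrib, hre, Finset.sum_const, nsmul_eq_mul, hcard, hmu]
    field_simp
    ring
  have hkey'' : (0:ℝ) ≤ (∑ i ∈ s, (((lam i).re - mu)^2 + ((lam i).im)^2))
      + N * ((mu - cr - 1/2)^2 - 1/4) := by
    have h1 : ∑ i ∈ s, (Complex.normSq (lam i - c - 1/2) - 1/4)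
        = (∑ i ∈ s, (((lam i).re - mu)^2 + ((lam i).im)^2))
          + 2*(mu - cr - 1/2) * (∑ i ∈ s, ((lam i).re - mu))
          + ((s.card : ℝ)) * ((mu - cr - 1/2)^2 - 1/4) := by
      rw [Finset.mul_sum, ← Finset.sum_add_distrib, ← nsmul_eq_mul, ← Finset.sum_const,
        ← Finset.sum_add_distrib]
      apply Finset.sum_congr rfl
      intro i _
      exact hterm1 i
    rw [h1, hsum_re_mu, mul_zero, add_zero, hcard] at hkey'
    exact hkey'
  -- identify the goal sum
  have hgoalsum : ∑ i ∈ s, ‖lam i - (((m : ℝ) / ((n : ℝ) - 1) : ℝ) : ℂ)‖ ^ 2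
      = ∑ i ∈ s, (((lam i).re - mu)^2 + ((lam i).im)^2) := by
    apply Finset.sum_congr rfl
    intro i _
    rw [Complex.sq_norm, Complex.normSq_apply]
    simp only [Complex.sub_re, Complex.sub_im, Complex.ofReal_re, Complex.ofReal_im]
    rw [hmu, hN]
    ring
  rw [hgoalsum]
  set S : ℝ := ∑ i ∈ s, (((lam i).re - mu)^2 + ((lam i).im)^2) with hS
  have hSlb : N * (1/4 - (mu - cr - 1/2)^2) ≤ S := by linarith
  have hfinal : ((m : ℝ) - N * cr) * (N * (cr + 1) - (m : ℝ)) / N ^ 2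
      = (N * (1/4 - (mu - cr - 1/2)^2)) / N := by
    rw [hmu]
    field_simp
    ring
  calc ((m : ℝ) - N * cr) * (N * (cr + 1) - (m : ℝ)) / N ^ 2
      = (N * (1/4 - (mu - cr - 1/2)^2)) / N := hfinal
    _ ≤ S / N := div_le_div_of_nonneg_right hSlb hNpos.le
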